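/- If G is d-degenerate with n ≥ d+3 vertices, then the number of maximal cliques of G is at most (n−d)·3^{d/3}. -/

import Mathlib

/-- A graph `G` is `d`-degenerate if every nonempty (induced) subgraph of `G`
contains a vertex of degree at most `d`. -/
def Degenerate {V : Type*} [Fintype V] [DecidableEq V] (G : SimpleGraph V)
    [DecidableRel G.Adj] (d : ℕ) : Prop :=
  ∀ s : Finset V, s.Nonempty → ∃ v ∈ s, (s.filter (fun w => G.Adj v w)).card ≤ d


section Aux

open Finset

variable {V : Type*} [Fintype V] [DecidableEq V] (G : SimpleGraph V) [DecidableRel G.Adj]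

open Classical in
/-- The maximal cliques of the subgraph induced on `s`. -/
noncomputable def MC (s : Finset V) : Finset (Finset V) :=
  s.powerset.filter (fun C => G.IsClique (C : Set V) ∧
    ∀ D ∈ s.powerset, G.IsClique (D : Set V) → C ⊆ D → C = D)

lemma mem_MC {s C : Finset V} :
    C ∈ MC G s ↔ C ⊆ s ∧ G.IsClique (C : Set V) ∧
      ∀ D : Finset V, D ⊆ s → G.IsClique (D : Set V) → C ⊆ D → C = D := by
  classical
  simp [MC, Finset.mem_filter, Finset.mem_powerset, and_assoc]

/-- Maximal cliques (inside `s`) that contain `w` inject, by erasing `w`, into the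
maximal cliques of the neighborhood of `w` inside `s`. -/
lemma card_MC_mem_le {s : Finset V} {w : V} (hw : w ∈ s) :
    ((MC G s).filter (fun C => w ∈ C)).card
      ≤ (MC G (s.filter (fun u => G.Adj w u))).card := by
  classical
  apply Finset.card_le_card_of_injOn (fun C => C.erase w)
  · intro C hC
    rw [Finset.mem_coe] at hC; show C.erase w ∈ MC G _
    simp only [Finset.mem_filter] at hC
    obtain ⟨hCmc, hwC⟩ := hC
    rw [mem_MC] at hCmc
    obtain ⟨hCs, hCcl, hCmax⟩ := hCmc
    rw [mem_MC]
    refine ⟨?_, hCcl.subset (by simp [Finset.coe_subset, Finset.erase_subset]), ?_⟩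
    · intro u hu
      rw [Finset.mem_erase] at hu
      refine Finset.mem_filter.mpr ⟨hCs hu.2, ?_⟩
      exact hCcl hwC (Finset.mem_coe.mpr hu.2) (Ne.symm hu.1)
    · intro D hDs hDcl hCD
      have hwD : w ∉ D := fun h => G.irrefl (Finset.mem_filter.mp (hDs h)).2
      have hD'cl : G.IsClique ((insert w D : Finset V) : Set V) := by
        rw [Finset.coe_insert]
        exact hDcl.insert (fun b hb _ => (Finset.mem_filter.mp (hDs hb)).2)
      have hD's : (insert w D : Finset V) ⊆ s := by
        intro u hu
        rcases Finset.mem_insert.mp hu with h | h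
        · exact h ▸ hw
        · exact Finset.filter_subset _ _ (hDs h)
      have hCD' : C ⊆ insert w D := by
        intro u hu
        by_cases h : u = w
        · exact h ▸ Finset.mem_insert_self _ _
        · exact Finset.mem_insert_of_mem (hCD (Finset.mem_erase.mpr ⟨h, hu⟩))
      have := hCmax _ hD's hD'cl hCD'
      rw [this, Finset.erase_insert hwD]
  · intro C1 h1 C2 h2 h
    simp only [Finset.coe_filter, Set.mem_setOf_eq] at h1 h2
    have e1 := Finset.insert_erase h1.2
    have e2 := Finset.insert_erase h2.2
    rw [e1, e2] at *
    rw [← Finset.insert_erase h1.2, ← Finset.insert_erase h2.2]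
    simp only at h
    rw [h]

lemma cube_le_three_pow {k : ℕ} (hk : 2 ≤ k) : k ^ 3 ≤ 3 ^ k := by
  rcases Nat.eq_or_lt_of_le hk with h | h
  · rw [← h]; norm_num
  · have h3 : 3 ≤ k := h
    clear hk h
    induction k, h3 using Nat.le_induction with
    | base => norm_num
    | succ k hk ih =>
      have : 3 ^ (k + 1) = 3 * 3 ^ k := by ring
      rw [this]
      calc (k + 1) ^ 3 ≤ 3 * k ^ 3 := by nlinarith [Nat.mul_le_mul_right (k*k) hk, Nat.mul_le_mul_right k hk, hk]
        _ ≤ 3 * 3 ^ k := by omega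

lemma nat_le_rpow {k : ℕ} (hk : 2 ≤ k) : (k : ℝ) ≤ (3 : ℝ) ^ ((k : ℝ) / 3) := by
  have h0 : (0 : ℝ) ≤ (3 : ℝ) ^ ((k : ℝ) / 3) := Real.rpow_nonneg (by norm_num) _
  have hcube : ((k : ℝ)) ^ (3 : ℕ) ≤ ((3 : ℝ) ^ ((k : ℝ) / 3)) ^ (3 : ℕ) := by
    have : ((3 : ℝ) ^ ((k : ℝ) / 3)) ^ (3 : ℕ) = (3 : ℝ) ^ (k : ℝ) := by
      rw [← Real.rpow_natCast ((3 : ℝ) ^ ((k : ℝ) / 3)) 3, ← Real.rpow_mul (by norm_num)]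
      norm_num
    rw [this, Real.rpow_natCast]
    exact_mod_cast cube_le_three_pow hk
  exact le_of_pow_le_pow_left₀ (by norm_num) h0 hcube

lemma moon_moser (s : Finset V) :
    ((MC G s).card : ℝ) ≤ (3 : ℝ) ^ ((s.card : ℝ) / 3) := by
  classical
  induction s using Finset.strongInduction with
  | _ s ih =>
  rcases Finset.eq_empty_or_nonempty s with rfl | hs
  · have h1 : MC G ∅ = {∅} := by
      ext C
      rw [mem_MC]
      simp only [Finset.subset_empty, Finset.mem_singleton]
      constructor
      · rintro ⟨rfl, _, _⟩; rfl
      · rintro rfl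
        refine ⟨rfl, by simp, ?_⟩
        rintro D rfl _ _; rfl
    rw [h1]
    norm_num
  have hexp : ∀ a b : ℕ, a ≤ b →
      (3 : ℝ) ^ ((a : ℝ) / 3) ≤ (3 : ℝ) ^ ((b : ℝ) / 3) := by
    intro a b hab
    apply Real.rpow_le_rpow_of_exponent_le (by norm_num)
    have : (a : ℝ) ≤ (b : ℝ) := by exact_mod_cast hab
    linarith
  by_cases hdom : ∃ v ∈ s, ∀ u ∈ s, u ≠ v → G.Adj v u
  · -- dominating vertex: every maximal clique contains v
    obtain ⟨v, hv, hvall⟩ := hdom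
    have hall : ∀ C ∈ MC G s, v ∈ C := by
      intro C hC
      rw [mem_MC] at hC
      obtain ⟨hCs, hCcl, hCmax⟩ := hC
      have hins : G.IsClique ((insert v C : Finset V) : Set V) := by
        rw [Finset.coe_insert]
        exact hCcl.insert (fun b hb hne => hvall b (hCs hb) hne.symm)
      have := hCmax _ (Finset.insert_subset hv hCs) hins (Finset.subset_insert _ _)
      rw [this]; exact Finset.mem_insert_self _ _
    have hfe : MC G s = (MC G s).filter (fun C => v ∈ C) :=
      (Finset.filter_true_of_mem hall).symm
    have hss : s.filter (fun u => G.Adj v u) ⊂ s :=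
      (Finset.ssubset_iff_of_subset (Finset.filter_subset _ _)).mpr
        ⟨v, hv, by simp [G.irrefl]⟩
    calc ((MC G s).card : ℝ)
        = (((MC G s).filter (fun C => v ∈ C)).card : ℝ) := by rw [← hfe]
      _ ≤ ((MC G (s.filter (fun u => G.Adj v u))).card : ℝ) := by
          exact_mod_cast card_MC_mem_le G hv
      _ ≤ (3 : ℝ) ^ (((s.filter (fun u => G.Adj v u)).card : ℝ) / 3) := ih _ hss
      _ ≤ (3 : ℝ) ^ ((s.card : ℝ) / 3) :=
          hexp _ _ (Finset.card_le_card (Finset.filter_subset _ _))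
  · push_neg at hdom
    obtain ⟨v, hv, hvmax⟩ := s.exists_max_image (fun u => (s.filter (fun x => G.Adj u x)).card) hs
    set N : Finset V := s.filter (fun u => G.Adj v u) with hN
    set T : Finset V := (s.erase v) \ N with hT
    have hNsub : N ⊆ s.erase v := by
      intro u hu
      rw [Finset.mem_filter] at hu
      exact Finset.mem_erase.mpr ⟨(hu.2).ne', hu.1⟩
    have hunion : N ∪ T = s.erase v := Finset.union_sdiff_of_subset hNsub
    have hdisj : Disjoint N T := Finset.disjoint_sdiff
    have hcard : N.card + T.card + 1 = s.card := by
      have h1 := Finset.card_union_of_disjoint hdisj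
      rw [hunion, Finset.card_erase_of_mem hv] at h1
      have h2 := Finset.card_pos.mpr hs
      omega
    have hvT : v ∉ T := fun h => (Finset.mem_erase.mp (Finset.mem_sdiff.mp h).1).1 rfl
    have hTne : T.Nonempty := by
      obtain ⟨u, hus, hune, hnadj⟩ := hdom v hv
      refine ⟨u, Finset.mem_sdiff.mpr ⟨Finset.mem_erase.mpr ⟨hune, hus⟩, ?_⟩⟩
      intro h
      exact hnadj (Finset.mem_filter.mp h).2
    have hcover : MC G s ⊆ (insert v T).biUnion
        (fun w => (MC G s).filter (fun C => w ∈ C)) := by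
      intro C hC
      rw [Finset.mem_biUnion]
      by_cases hvC : v ∈ C
      · exact ⟨v, Finset.mem_insert_self _ _, Finset.mem_filter.mpr ⟨hC, hvC⟩⟩
      by_cases hTex : ∃ w ∈ T, w ∈ C
      · obtain ⟨w, hwT, hwC⟩ := hTex
        exact ⟨w, Finset.mem_insert_of_mem hwT, Finset.mem_filter.mpr ⟨hC, hwC⟩⟩
      exfalso
      push_neg at hTex
      rw [mem_MC] at hC
      obtain ⟨hCs, hCcl, hCmax⟩ := hC
      have hCN : C ⊆ N := by
        intro u hu
        have hus := hCs hu
        have hune : u ≠ v := fun h => hvC (h ▸ hu)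
        by_contra hNu
        exact hTex u (Finset.mem_sdiff.mpr ⟨Finset.mem_erase.mpr ⟨hune, hus⟩, hNu⟩) hu
      have hins : G.IsClique ((insert v C : Finset V) : Set V) := by
        rw [Finset.coe_insert]
        exact hCcl.insert (fun b hb _ => (Finset.mem_filter.mp (hCN hb)).2)
      have := hCmax _ (Finset.insert_subset hv hCs) hins (Finset.subset_insert _ _)
      exact hvC (this ▸ Finset.mem_insert_self v C)
    have key : ∀ w ∈ insert v T,
        (((MC G s).filter (fun C => w ∈ C)).card : ℝ) ≤ (3 : ℝ) ^ ((N.card : ℝ) / 3) := by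
      intro w hw
      have hws : w ∈ s := by
        rcases Finset.mem_insert.mp hw with rfl | h
        · exact hv
        · exact (Finset.mem_erase.mp (Finset.mem_sdiff.mp h).1).2
      have hss : s.filter (fun u => G.Adj w u) ⊂ s :=
        (Finset.ssubset_iff_of_subset (Finset.filter_subset _ _)).mpr
          ⟨w, hws, by simp [G.irrefl]⟩
      calc (((MC G s).filter (fun C => w ∈ C)).card : ℝ)
          ≤ ((MC G (s.filter (fun u => G.Adj w u))).card : ℝ) := by
            exact_mod_cast card_MC_mem_le G hws
        _ ≤ (3 : ℝ) ^ (((s.filter (fun u => G.Adj w u)).card : ℝ) / 3) := ih _ hss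
        _ ≤ (3 : ℝ) ^ ((N.card : ℝ) / 3) := hexp _ _ (hvmax w hws)
    have hsum : ((MC G s).card : ℝ)
        ≤ ((T.card + 1 : ℕ) : ℝ) * (3 : ℝ) ^ ((N.card : ℝ) / 3) := by
      have h1 : (MC G s).card ≤ ∑ w ∈ insert v T, ((MC G s).filter (fun C => w ∈ C)).card :=
        le_trans (Finset.card_le_card hcover) (Finset.card_biUnion_le)
      have h2 : ((MC G s).card : ℝ)
          ≤ ∑ w ∈ insert v T, (((MC G s).filter (fun C => w ∈ C)).card : ℝ) := by
        exact_mod_cast h1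
      refine le_trans h2 ?_
      have h3 := Finset.sum_le_sum key
      rw [Finset.sum_const, Finset.card_insert_of_notMem hvT] at h3
      simpa [nsmul_eq_mul, add_comm] using h3
    have hk2 : 2 ≤ T.card + 1 := by
      have := Finset.card_pos.mpr hTne
      omega
    calc ((MC G s).card : ℝ)
        ≤ ((T.card + 1 : ℕ) : ℝ) * (3 : ℝ) ^ ((N.card : ℝ) / 3) := hsum
      _ ≤ (3 : ℝ) ^ (((T.card + 1 : ℕ) : ℝ) / 3) * (3 : ℝ) ^ ((N.card : ℝ) / 3) := by
          apply mul_le_mul_of_nonneg_right (nat_le_rpow hk2)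
          exact Real.rpow_nonneg (by norm_num) _
      _ = (3 : ℝ) ^ ((s.card : ℝ) / 3) := by
          rw [← Real.rpow_add (by norm_num : (0:ℝ) < 3)]
          congr 1
          have : ((N.card : ℝ) + (T.card : ℝ) + 1) = (s.card : ℝ) := by
            exact_mod_cast congrArg (fun x : ℕ => (x : ℝ)) hcard
          push_cast
          linarith

lemma MC_card_le (d : ℕ) (hG : Degenerate G d) (s : Finset V) (hn : d + 3 ≤ s.card) :
    ((MC G s).card : ℝ) ≤ ((s.card : ℝ) - d) * (3 : ℝ) ^ ((d : ℝ) / 3) := by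
  classical
  induction s using Finset.strongInduction with
  | _ s ih =>
  have hexp : ∀ a b : ℕ, a ≤ b →
      (3 : ℝ) ^ ((a : ℝ) / 3) ≤ (3 : ℝ) ^ ((b : ℝ) / 3) := by
    intro a b hab
    apply Real.rpow_le_rpow_of_exponent_le (by norm_num)
    have : (a : ℝ) ≤ (b : ℝ) := by exact_mod_cast hab
    linarith
  rcases eq_or_lt_of_le hn with heq | hlt
  · -- base case: s.card = d + 3
    have h1 := moon_moser G s
    have h2 : ((s.card : ℝ)) = (d : ℝ) + 3 := by exact_mod_cast heq.symm
    rw [h2] at h1 ⊢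
    calc ((MC G s).card : ℝ) ≤ (3 : ℝ) ^ (((d : ℝ) + 3) / 3) := h1
      _ = ((d : ℝ) + 3 - d) * (3 : ℝ) ^ ((d : ℝ) / 3) := by
          have : ((d : ℝ) + 3) / 3 = (d : ℝ) / 3 + 1 := by ring
          rw [this, Real.rpow_add (by norm_num : (0:ℝ) < 3)]
          rw [Real.rpow_one]
          ring
  · -- inductive step
    have hs : s.Nonempty := Finset.card_pos.mp (by omega)
    obtain ⟨v, hv, hdeg⟩ := hG s hs
    have hsplit : ((MC G s).filter (fun C => v ∈ C)).card
        + ((MC G s).filter (fun C => ¬ v ∈ C)).card = (MC G s).card :=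
      Finset.card_filter_add_card_filter_not _
    -- cliques containing v
    have hb1 : (((MC G s).filter (fun C => v ∈ C)).card : ℝ)
        ≤ (3 : ℝ) ^ ((d : ℝ) / 3) := by
      calc (((MC G s).filter (fun C => v ∈ C)).card : ℝ)
          ≤ ((MC G (s.filter (fun u => G.Adj v u))).card : ℝ) := by
            exact_mod_cast card_MC_mem_le G hv
        _ ≤ (3 : ℝ) ^ (((s.filter (fun u => G.Adj v u)).card : ℝ) / 3) := moon_moser G _
        _ ≤ (3 : ℝ) ^ ((d : ℝ) / 3) := hexp _ _ hdeg
    -- cliques avoiding v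
    have hsub : (MC G s).filter (fun C => ¬ v ∈ C) ⊆ MC G (s.erase v) := by
      intro C hC
      rw [Finset.mem_filter, mem_MC] at hC
      obtain ⟨⟨hCs, hCcl, hCmax⟩, hvC⟩ := hC
      rw [mem_MC]
      refine ⟨Finset.subset_erase.mpr ⟨hCs, hvC⟩, hCcl, ?_⟩
      intro D hDs hDcl hCD
      exact hCmax D (hDs.trans (Finset.erase_subset _ _)) hDcl hCD
    have hess : s.erase v ⊂ s := Finset.erase_ssubset hv
    have hecard : (s.erase v).card = s.card - 1 := Finset.card_erase_of_mem hv
    have hecard' : ((s.erase v).card : ℝ) = (s.card : ℝ) - 1 := by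
      rw [hecard]
      have : 1 ≤ s.card := by omega
      push_cast [Nat.cast_sub this]
      ring
    have hb2 : (((MC G s).filter (fun C => ¬ v ∈ C)).card : ℝ)
        ≤ ((s.card : ℝ) - 1 - d) * (3 : ℝ) ^ ((d : ℝ) / 3) := by
      have h1 : (((MC G s).filter (fun C => ¬ v ∈ C)).card : ℝ)
          ≤ ((MC G (s.erase v)).card : ℝ) := by
        exact_mod_cast Finset.card_le_card hsub
      have h2 := ih (s.erase v) hess (by omega)
      rw [hecard'] at h2
      linarith
    have hcast : (((MC G s).card : ℕ) : ℝ)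
        = (((MC G s).filter (fun C => v ∈ C)).card : ℝ)
          + (((MC G s).filter (fun C => ¬ v ∈ C)).card : ℝ) := by
      exact_mod_cast hsplit.symm
    rw [hcast]
    have hpow : (0:ℝ) ≤ (3 : ℝ) ^ ((d : ℝ) / 3) := Real.rpow_nonneg (by norm_num) _
    nlinarith [hb1, hb2]

end Aux

/-- If `G` is `d`-degenerate with `n ≥ d + 3` vertices, then the number of maximal
cliques of `G` is at most `(n - d)·3^{d/3}`. -/
theorem card_maximal_cliques_le {V : Type*} [Fintype V] [DecidableEq V]
    (G : SimpleGraph V) [DecidableRel G.Adj] (d : ℕ) (hG : Degenerate G d)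
    (hn : d + 3 ≤ Fintype.card V) :
    (Nat.card {C : Finset V // G.IsClique (C : Set V) ∧
        ∀ D : Finset V, G.IsClique (D : Set V) → C ⊆ D → C = D} : ℝ)
      ≤ ((Fintype.card V : ℝ) - d) * (3 : ℝ) ^ ((d : ℝ) / 3) := by
  classical
  have hM := MC_card_le G d hG Finset.univ (by simpa using hn)
  have heq : Nat.card {C : Finset V // G.IsClique (C : Set V) ∧
      ∀ D : Finset V, G.IsClique (D : Set V) → C ⊆ D → C = D} = (MC G Finset.univ).card := by
    rw [Nat.card_eq_fintype_card, Fintype.card_subtype]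
    congr 1
    ext C
    simp only [Finset.mem_filter, Finset.mem_univ, true_and, mem_MC, Finset.subset_univ]
    tauto
  rw [heq]
  simpa using hM
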